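/- Let N ≥ 3 and let x_1, …, x_N be points in ℝ^d with barycentre μ = N^{-1}·Σ_{i=1}^N x_i. For an index l, removing x_l from the configuration yields the minimal value of G_{N-1} among all (N-1)-element sub-configurations of (x_1,…,x_N) if and only if ‖x_l − μ‖ = max_{1≤j≤N} ‖x_j − μ‖; equivalently, for any indices l, j, if ‖x_l − μ‖ ≥ ‖x_j − μ‖ then G_{N-1} of the configuration with x_l removed is less than or equal to G_{N-1} of the configuration with x_j removed. -/

import Mathlib

open MeasureTheory Filter Metric
open scoped Classical

noncomputable section

/-- The energy `G_n` of a finite configuration of points (given as a multiset):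
the sum of the squared distances from the points to their barycentre. -/
def energy {E : Type*} [NormedAddCommGroup E] [NormedSpace ℝ E] (s : Multiset E) : ℝ :=
  (s.map fun x => ‖x - (s.card : ℝ)⁻¹ • s.sum‖ ^ 2).sum


open scoped RealInnerProductSpace

section Aux
variable {E : Type*} [NormedAddCommGroup E] [InnerProductSpace ℝ E]


lemma sum_map_inner_sub (u : Multiset E) (v w : E) :
    (u.map fun y => (⟪y - v, w⟫ : ℝ)).sum = ⟪u.sum - u.card • v, w⟫ := by
  induction u using Multiset.induction with
  | empty => simp
  | cons a s ih =>
    rw [Multiset.map_cons, Multiset.sum_cons, ih, Multiset.sum_cons, Multiset.card_cons,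
      succ_nsmul]
    simp only [inner_sub_left, inner_add_left]
    ring

lemma sum_sq_shift (u : Multiset E) (c v : E) (h : u.sum = u.card • v) :
    (u.map fun y => ‖y - c‖ ^ 2).sum
      = (u.map fun y => ‖y - v‖ ^ 2).sum + u.card * ‖v - c‖ ^ 2 := by
  have hpt : ∀ y : E, ‖y - c‖ ^ 2 = ‖y - v‖ ^ 2 + (2 * ⟪y - v, v - c⟫ + ‖v - c‖ ^ 2) := by
    intro y
    have h2 := norm_add_sq_real (y - v) (v - c)
    rw [sub_add_sub_cancel] at h2
    linarith
  calc (u.map fun y => ‖y - c‖ ^ 2).sum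
      = (u.map fun y => ‖y - v‖ ^ 2 + (2 * ⟪y - v, v - c⟫ + ‖v - c‖ ^ 2)).sum := by
        exact congrArg Multiset.sum (Multiset.map_congr rfl fun y _ => hpt y)
    _ = (u.map fun y => ‖y - v‖ ^ 2).sum + ((u.map fun y => 2 * ⟪y - v, v - c⟫).sum
          + (u.map fun _ => ‖v - c‖ ^ 2).sum) := by
        rw [← Multiset.sum_map_add, ← Multiset.sum_map_add]
    _ = (u.map fun y => ‖y - v‖ ^ 2).sum + u.card * ‖v - c‖ ^ 2 := by
        rw [Multiset.sum_map_mul_left, sum_map_inner_sub, h, sub_self, inner_zero_left]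
        simp [Multiset.map_const', Multiset.sum_replicate, nsmul_eq_mul]

lemma energy_erase [DecidableEq E] (s : Multiset E) (a : E) (ha : a ∈ s) (hcard : 2 ≤ s.card) :
    energy (s.erase a)
      = energy s - (s.card : ℝ) / ((s.card : ℝ) - 1)
          * ‖a - (s.card : ℝ)⁻¹ • s.sum‖ ^ 2 := by
  have hn2 : (2 : ℝ) ≤ (s.card : ℝ) := by exact_mod_cast hcard
  have hn1' : (s.card : ℝ) - 1 ≠ 0 := by linarith
  have hcons : a ::ₘ s.erase a = s := Multiset.cons_erase ha
  have hcardR : ((s.erase a).card : ℝ) = (s.card : ℝ) - 1 := by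
    rw [Multiset.card_erase_of_mem ha, Nat.pred_eq_sub_one, Nat.cast_sub (by omega), Nat.cast_one]
  have hsum' : (s.erase a).sum = s.sum - a := by
    conv_rhs => rw [← hcons]
    rw [Multiset.sum_cons]; abel
  set μ : E := (s.card : ℝ)⁻¹ • s.sum with hμ
  set μ' : E := ((s.card : ℝ) - 1)⁻¹ • (s.erase a).sum with hμ'
  have hE' : energy (s.erase a) = ((s.erase a).map fun y => ‖y - μ'‖ ^ 2).sum := by
    rw [energy, hcardR]
  have hshift := sum_sq_shift (s.erase a) μ μ' (by
    rw [hμ', ← Nat.cast_smul_eq_nsmul ℝ, smul_smul, hcardR, mul_inv_cancel₀ hn1', one_smul])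
  have hsplit : energy s = ‖a - μ‖ ^ 2 + ((s.erase a).map fun y => ‖y - μ‖ ^ 2).sum := by
    rw [energy, ← hμ]
    conv_lhs => rw [← hcons]
    rw [Multiset.map_cons, Multiset.sum_cons]
  have hdiff : μ' - μ = ((s.card : ℝ) - 1)⁻¹ • (μ - a) := by
    rw [hμ', hμ, hsum']
    match_scalars <;> field_simp <;> ring
  have hnorm : ‖μ' - μ‖ ^ 2 = (((s.card : ℝ) - 1)⁻¹) ^ 2 * ‖a - μ‖ ^ 2 := by
    rw [hdiff, norm_smul, Real.norm_eq_abs, mul_pow, sq_abs, norm_sub_rev]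
  rw [hE']
  rw [hshift, hcardR, hnorm] at hsplit
  have hfinal : ((s.erase a).map fun y => ‖y - μ'‖ ^ 2).sum
      = energy s - ‖a - μ‖ ^ 2
        - ((s.card : ℝ) - 1) * (((s.card : ℝ) - 1)⁻¹) ^ 2 * ‖a - μ‖ ^ 2 := by
    linarith
  rw [hfinal]
  field_simp
  ring

lemma energy_erase_le [DecidableEq E] (s : Multiset E) (a b : E) (ha : a ∈ s) (hb : b ∈ s) (hcard : 2 ≤ s.card)
    (h : ‖b - (s.card : ℝ)⁻¹ • s.sum‖ ≤ ‖a - (s.card : ℝ)⁻¹ • s.sum‖) :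
    energy (s.erase a) ≤ energy (s.erase b) := by
  rw [energy_erase s a ha hcard, energy_erase s b hb hcard]
  have hn2 : (2 : ℝ) ≤ (s.card : ℝ) := by exact_mod_cast hcard
  have hc : 0 < (s.card : ℝ) / ((s.card : ℝ) - 1) := by
    apply div_pos <;> linarith
  have hsq := pow_le_pow_left₀ (norm_nonneg _) h 2
  nlinarith [hsq, hc]

lemma exists_erase {α : Type*} [DecidableEq α] (t s : Multiset α) (h : s ≤ t)
    (hc : s.card + 1 = t.card) : ∃ a ∈ t, s = t.erase a := by
  obtain ⟨a, hu⟩ := Multiset.card_eq_one.mp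
    (show (t - s).card = 1 by rw [Multiset.card_sub h]; omega)
  have ht : t = a ::ₘ s := by
    rw [← tsub_add_cancel_of_le h, hu, Multiset.singleton_add]
  exact ⟨a, ht ▸ Multiset.mem_cons_self a s, by rw [ht, Multiset.erase_cons_head]⟩


end Aux

/-- For `N ≥ 3` points in `ℝ^d` with barycentre `μ`, removing `x l` minimizes `G_{N-1}`
over all `(N-1)`-element sub-configurations iff `‖x l - μ‖` is maximal; equivalently,
if `‖x l - μ‖ ≥ ‖x j - μ‖` then the energy after removing `x l` is at most the energy
after removing `x j`. -/
theorem stmt0 {d N : ℕ} (hN : 3 ≤ N) (x : Fin N → EuclideanSpace ℝ (Fin d)) :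
    (∀ l : Fin N,
      (∀ s : Multiset (EuclideanSpace ℝ (Fin d)), s ≤ ↑(List.ofFn x) → s.card = N - 1 →
          energy ((↑(List.ofFn x) : Multiset _).erase (x l)) ≤ energy s) ↔
        (∀ j : Fin N, ‖x j - (N : ℝ)⁻¹ • ∑ i, x i‖ ≤ ‖x l - (N : ℝ)⁻¹ • ∑ i, x i‖)) ∧
    (∀ l j : Fin N, ‖x j - (N : ℝ)⁻¹ • ∑ i, x i‖ ≤ ‖x l - (N : ℝ)⁻¹ • ∑ i, x i‖ →
      energy ((↑(List.ofFn x) : Multiset _).erase (x l)) ≤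
        energy ((↑(List.ofFn x) : Multiset _).erase (x j))) := by
  set t : Multiset (EuclideanSpace ℝ (Fin d)) := ↑(List.ofFn x) with ht
  have hcard : t.card = N := by simp [ht]
  have hsum : t.sum = ∑ i, x i := by rw [ht, Multiset.sum_coe, List.sum_ofFn]
  have hmem : ∀ l : Fin N, x l ∈ t := fun l => by
    rw [ht]; exact Multiset.mem_coe.mpr ((List.mem_ofFn).mpr ⟨l, rfl⟩)
  have h2 : 2 ≤ t.card := by omega
  have key : ∀ l j : Fin N, ‖x j - (N : ℝ)⁻¹ • ∑ i, x i‖ ≤ ‖x l - (N : ℝ)⁻¹ • ∑ i, x i‖ →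
      energy (t.erase (x l)) ≤ energy (t.erase (x j)) := by
    intro l j hlj
    apply energy_erase_le t (x l) (x j) (hmem l) (hmem j) h2
    rw [hcard, hsum]; exact hlj
  refine ⟨fun l => ⟨fun hmin j => ?_, fun hmax s hs hcards => ?_⟩, key⟩
  · have hEj := hmin (t.erase (x j)) (Multiset.erase_le _ _)
      (by rw [Multiset.card_erase_of_mem (hmem j), hcard]; exact Nat.pred_eq_sub_one)
    rw [energy_erase t (x l) (hmem l) h2, energy_erase t (x j) (hmem j) h2,
      hcard, hsum] at hEj
    have hN2 : (2 : ℝ) ≤ (N : ℝ) := by exact_mod_cast le_trans (by norm_num) hN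
    have hc : 0 < (N : ℝ) / ((N : ℝ) - 1) := by apply div_pos <;> linarith
    have hsq : ‖x j - (N : ℝ)⁻¹ • ∑ i, x i‖ ^ 2 ≤ ‖x l - (N : ℝ)⁻¹ • ∑ i, x i‖ ^ 2 := by
      have h' : (N : ℝ) / ((N : ℝ) - 1) * ‖x j - (N : ℝ)⁻¹ • ∑ i, x i‖ ^ 2
          ≤ (N : ℝ) / ((N : ℝ) - 1) * ‖x l - (N : ℝ)⁻¹ • ∑ i, x i‖ ^ 2 := by linarith
      exact le_of_mul_le_mul_left h' hc
    exact (pow_le_pow_iff_left₀ (norm_nonneg _) (norm_nonneg _) two_ne_zero).mp hsq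
  · obtain ⟨a, hat, hsa⟩ := exists_erase t s hs (by omega)
    obtain ⟨j, rfl⟩ : ∃ j, x j = a := (List.mem_ofFn).mp (Multiset.mem_coe.mp hat)
    rw [hsa]
    exact key l j (hmax j)
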